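/- Let m ≥ 2, 1 ≤ t < m, ρ ≥ 1, n ≥ ρ+1. With A_x as defined (first ρ coordinates free, coordinate ρ+1 shifted by 0,...,t−1, rest fixed, x removed), for any x, y ∈ Z_m^n the sumset A_x + A_y has at most (2t−1)·m^ρ elements, and hence at most 2(t·m^ρ − 1) elements. -/
import Mathlib


/-- The model construction in `(ℤ/m)^n`: first `ρ` coordinates free, coordinate `ρ+1`
(0-indexed: `ρ`) shifted by `0, ..., t-1`, remaining coordinates fixed, and `x` removed. -/
def modelA (m n ρ t : ℕ) [NeZero m] (hρ : ρ < n) (x : Fin n → ZMod m) :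
    Finset (Fin n → ZMod m) :=
  ((Finset.univ : Finset (Fin n → ZMod m)).filter fun z =>
    (∀ j : Fin n, ρ < (j : ℕ) → z j = x j) ∧
    ∃ i : Fin t, z ⟨ρ, hρ⟩ = x ⟨ρ, hρ⟩ + ((i : ℕ) : ZMod m)).erase x

open Pointwise

/-- the sumset `A_x + A_y` has at most `(2t−1)·m^ρ` elements, hence at most
`2(t·m^ρ − 1)` elements. -/
theorem stmt_4 (m n ρ t : ℕ) [NeZero m] (hm : 2 ≤ m) (ht : 1 ≤ t) (htm : t < m)
    (hρ1 : 1 ≤ ρ) (hρ : ρ < n) (x y : Fin n → ZMod m) :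
    (modelA m n ρ t hρ x + modelA m n ρ t hρ y).card ≤ (2 * t - 1) * m ^ ρ ∧
    (modelA m n ρ t hρ x + modelA m n ρ t hρ y).card ≤ 2 * (t * m ^ ρ - 1) := by
  classical
  have key : (modelA m n ρ t hρ x + modelA m n ρ t hρ y).card ≤ (2 * t - 1) * m ^ ρ := by
    set f : (Fin ρ → ZMod m) × Fin (2 * t - 1) → (Fin n → ZMod m) :=
      fun p j => if h : (j : ℕ) < ρ then p.1 ⟨j, h⟩
        else if (j : ℕ) = ρ then x ⟨ρ, hρ⟩ + y ⟨ρ, hρ⟩ + ((p.2 : ℕ) : ZMod m)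
        else x j + y j with hf
    have hsub : modelA m n ρ t hρ x + modelA m n ρ t hρ y ⊆ Finset.univ.image f := by
      intro c hc
      rw [Finset.mem_add] at hc
      obtain ⟨a, ha, b, hb, rfl⟩ := hc
      simp only [modelA, Finset.mem_erase, Finset.mem_filter, Finset.mem_univ, true_and]
        at ha hb
      obtain ⟨-, hax, i₁, hai⟩ := ha
      obtain ⟨-, hbx, i₂, hbi⟩ := hb
      have hi : (i₁ : ℕ) + (i₂ : ℕ) < 2 * t - 1 := by
        have h1 := i₁.2
        have h2 := i₂.2
        omega
      refine Finset.mem_image.2 ⟨⟨fun k => a ⟨k, k.2.trans hρ⟩ + b ⟨k, k.2.trans hρ⟩,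
        ⟨(i₁ : ℕ) + (i₂ : ℕ), hi⟩⟩, Finset.mem_univ _, ?_⟩
      funext j
      simp only [hf]
      split_ifs with h1 h2
      · show a ⟨(j : ℕ), _⟩ + b ⟨(j : ℕ), _⟩ = (a + b) j
        simp
      · have hj : j = ⟨ρ, hρ⟩ := Fin.ext h2
        subst hj
        show x ⟨ρ, hρ⟩ + y ⟨ρ, hρ⟩ + (((i₁ : ℕ) + (i₂ : ℕ) : ℕ) : ZMod m) = (a + b) _
        have : (a + b) ⟨ρ, hρ⟩ = a ⟨ρ, hρ⟩ + b ⟨ρ, hρ⟩ := rfl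
        rw [this, hai, hbi]
        push_cast
        ring
      · have hj : ρ < (j : ℕ) := by omega
        show x j + y j = (a + b) j
        have : (a + b) j = a j + b j := rfl
        rw [this, hax j hj, hbx j hj]
    calc (modelA m n ρ t hρ x + modelA m n ρ t hρ y).card
        ≤ (Finset.univ.image f).card := Finset.card_le_card hsub
      _ ≤ (Finset.univ : Finset ((Fin ρ → ZMod m) × Fin (2 * t - 1))).card :=
          Finset.card_image_le
      _ = m ^ ρ * (2 * t - 1) := by
          rw [Finset.card_univ, Fintype.card_prod, Fintype.card_fin]
          simp [ZMod.card]
      _ = (2 * t - 1) * m ^ ρ := mul_comm _ _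
  refine ⟨key, ?_⟩
  have hM : 2 ≤ m ^ ρ := le_trans hm (Nat.le_self_pow (by omega) m)
  have e : (2 * t - 1) * m ^ ρ = 2 * (t * m ^ ρ) - m ^ ρ := by
    rw [Nat.sub_mul, one_mul, mul_assoc]
  rw [e] at key
  set u := t * m ^ ρ with hu
  have hu2 : 2 ≤ u := le_trans hM (Nat.le_mul_of_pos_left _ ht)
  omega
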